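/- Energy dissipation identity for smooth solutions of the Darcy MHD system: if (h,B,D,P) is a C¹ solution on [0,T]×𝕋³ with h > 0 of the system ∂_t h + ∇·P = 0, ∂_t B + ∇×(B×(P/h) + D/h) = 0, D = ∇×(B/h), P = ∇·(B⊗B/h) + ∇(1/h), ∇·B = 0, then d/dt ∫_{𝕋³} (B²+1)/(2h) + ∫_{𝕋³} (D²+P²)/h = 0. -/

import Mathlib

open MeasureTheory
noncomputable section

/-- Euclidean `ℝ³`; functions on the torus `𝕋³ = ℝ³/ℤ³` are modelled as
`ℤ³`-periodic functions on `ℝ³`. -/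
abbrev E3 := EuclideanSpace ℝ (Fin 3)

/-- The `i`-th standard basis vector of `ℝ³`. -/
def unitv (i : Fin 3) : E3 := EuclideanSpace.single i 1

/-- `ℤ³`-periodicity (the function descends to the torus `𝕋³ = ℝ³/ℤ³`). -/
def Per (f : E3 → ℝ) : Prop :=
  ∀ (x : E3) (k : Fin 3 → ℤ), f (x + ((WithLp.equiv 2 (Fin 3 → ℝ)).symm fun i => (k i : ℝ))) = f x

/-- A fundamental domain `[0,1)³` of the torus; `∫_{𝕋³} = ∫_{Box}`. -/
def Box : Set E3 := {x | ∀ i, x i ∈ Set.Ico (0:ℝ) 1}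

/-- Time derivative `∂ₜF` of a function on `ℝ × ℝ³` (time × space). -/
def pdt (F : ℝ × E3 → ℝ) (p : ℝ × E3) : ℝ := fderiv ℝ F p (1, 0)

/-- Spatial partial derivative `∂ᵢF` of a function on `ℝ × ℝ³`. -/
def pdx (i : Fin 3) (F : ℝ × E3 → ℝ) (p : ℝ × E3) : ℝ := fderiv ℝ F p (0, unitv i)

/-- Spatial partial derivative `∂ᵢf` of a function on `ℝ³`. -/
def spd (i : Fin 3) (f : E3 → ℝ) (x : E3) : ℝ := fderiv ℝ f x (unitv i)

/-- `i`-th component of the curl `∇×X` of a (time-dependent) vector field,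
`(∇×X)ᵢ = ∂_{i+1}X_{i+2} - ∂_{i+2}X_{i+1}` (cyclic indices in `Fin 3`). -/
def curlx (X : Fin 3 → ℝ × E3 → ℝ) (i : Fin 3) (p : ℝ × E3) : ℝ :=
  pdx (i+1) (X (i+2)) p - pdx (i+2) (X (i+1)) p

section Toolkit
variable {α : Type*} [NormedAddCommGroup α] [NormedSpace ℝ α] {f g : α → ℝ} {p v : α}

lemma fdA (hf : DifferentiableAt ℝ f p) (hg : DifferentiableAt ℝ g p) :
    fderiv ℝ (fun x => f x + g x) p v = fderiv ℝ f p v + fderiv ℝ g p v := by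
  rw [fderiv_fun_add hf hg]; simp

lemma fdS (hf : DifferentiableAt ℝ f p) (hg : DifferentiableAt ℝ g p) :
    fderiv ℝ (fun x => f x - g x) p v = fderiv ℝ f p v - fderiv ℝ g p v := by
  rw [fderiv_fun_sub hf hg]; simp

lemma fdM (hf : DifferentiableAt ℝ f p) (hg : DifferentiableAt ℝ g p) :
    fderiv ℝ (fun x => f x * g x) p v = fderiv ℝ f p v * g p + f p * fderiv ℝ g p v := by
  rw [fderiv_fun_mul hf hg]; simp [mul_comm]; ring

lemma fdI (hf : DifferentiableAt ℝ f p) (hne : f p ≠ 0) :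
    fderiv ℝ (fun x => (f x)⁻¹) p v = -fderiv ℝ f p v / (f p) ^ 2 := by
  have h1 : (fun x => (f x)⁻¹) = (fun y : ℝ => y⁻¹) ∘ f := rfl
  rw [h1, fderiv_comp p (differentiableAt_inv hne) hf]
  simp [fderiv_inv]
  field_simp

lemma fdD (hf : DifferentiableAt ℝ f p) (hg : DifferentiableAt ℝ g p) (hne : g p ≠ 0) :
    fderiv ℝ (fun x => f x / g x) p v
      = (fderiv ℝ f p v * g p - f p * fderiv ℝ g p v) / (g p) ^ 2 := by
  have h2 : (fun x => f x / g x) = fun x => f x * (g x)⁻¹ := by ext x; rw [div_eq_mul_inv]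
  rw [h2, fdM (g := fun x => (g x)⁻¹) hf (hg.inv hne), fdI hg hne]
  field_simp; ring

lemma fdP2 (hf : DifferentiableAt ℝ f p) :
    fderiv ℝ (fun x => (f x) ^ 2) p v = 2 * f p * fderiv ℝ f p v := by
  have h2 : (fun x => (f x) ^ 2) = fun x => f x * f x := by ext x; ring
  rw [h2, fdM hf hf]; ring

lemma fdCM (c : ℝ) (hf : DifferentiableAt ℝ f p) :
    fderiv ℝ (fun x => c * f x) p v = c * fderiv ℝ f p v := by
  rw [fderiv_const_mul hf]; simp

lemma fdSum {f : Fin 3 → α → ℝ} (hf : ∀ i, DifferentiableAt ℝ (f i) p) :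
    fderiv ℝ (fun x => ∑ i, f i x) p v = ∑ i, fderiv ℝ (f i) p v := by
  rw [fderiv_fun_sum (fun i _ => hf i)]; simp

end Toolkit

section Funs
variable (h : ℝ × E3 → ℝ) (B D P : Fin 3 → ℝ × E3 → ℝ)

/-- The vector field inside the curl in the induction equation. -/
def Ffun (j : Fin 3) : ℝ × E3 → ℝ :=
  fun q => (B (j+1) q * P (j+2) q - B (j+2) q * P (j+1) q + D j q) / h q

/-- `g = (|B|²+1)/(2h²)`. -/
def gfun : ℝ × E3 → ℝ := fun q => ((∑ i, (B i q)^2) + 1) / (2 * (h q)^2)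

/-- `G = (|B|²+1)/(2h)`, the energy density. -/
def Gfun : ℝ × E3 → ℝ := fun q => ((∑ i, (B i q)^2) + 1) / (2 * h q)

/-- The flux vector field `W = (B/h) × F + g P`. -/
def Wfun (i : Fin 3) : ℝ × E3 → ℝ :=
  fun q => B (i+1) q / h q * Ffun h B D P (i+2) q
    - B (i+2) q / h q * Ffun h B D P (i+1) q + gfun h B q * P i q
end Funs

section Reg
variable {h : ℝ × E3 → ℝ} {B D P : Fin 3 → ℝ × E3 → ℝ}
variable (hreg : ContDiff ℝ 1 h) (hBreg : ∀ i, ContDiff ℝ 1 (B i))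
  (hDreg : ∀ i, ContDiff ℝ 1 (D i)) (hPreg : ∀ i, ContDiff ℝ 1 (P i))
  (hne : ∀ p, h p ≠ 0)

include hreg hne

include hBreg hPreg hDreg in
lemma Fc (j : Fin 3) : ContDiff ℝ 1 (Ffun h B D P j) :=
  ((((hBreg _).mul (hPreg _)).sub ((hBreg _).mul (hPreg _))).add (hDreg j)).div hreg hne

include hBreg in
lemma gc : ContDiff ℝ 1 (gfun h B) :=
  ((ContDiff.sum fun i _ => (hBreg i).pow 2).add contDiff_const).div
    (contDiff_const.mul (hreg.pow 2)) (fun p => by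
      have := hne p; positivity)

include hBreg in
lemma Gc : ContDiff ℝ 1 (Gfun h B) :=
  ((ContDiff.sum fun i _ => (hBreg i).pow 2).add contDiff_const).div
    (contDiff_const.mul hreg) (fun p => by
      have := hne p
      intro hc
      rcases mul_eq_zero.mp hc with hc | hc
      · norm_num at hc
      · exact this hc)

include hBreg hDreg hPreg in
lemma Wc (i : Fin 3) : ContDiff ℝ 1 (Wfun h B D P i) :=
  ((((hBreg _).div hreg hne).mul (Fc hreg hBreg hDreg hPreg hne _)).sub
    (((hBreg _).div hreg hne).mul (Fc hreg hBreg hDreg hPreg hne _))).add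
    ((gc hreg hBreg hne).mul (hPreg i))

end Reg

-- the identification (Fin 3 → ℝ) → E3
def psi3 : (Fin 3 → ℝ) → E3 := ⇑(WithLp.equiv 2 (Fin 3 → ℝ)).symm

lemma cont_psi3 : Continuous psi3 :=
  (PiLp.continuousLinearEquiv 2 ℝ (fun _ : Fin 3 => ℝ)).symm.continuous

lemma psi3_single (i : Fin 3) : psi3 (Pi.single i 1) = unitv i := rfl

lemma psi3_insertNth (i : Fin 3) (y : Fin 2 → ℝ) :
    psi3 (i.insertNth 1 y)
      = psi3 (i.insertNth 0 y)
        + ((WithLp.equiv 2 (Fin 3 → ℝ)).symm fun j => (((if j = i then 1 else 0 : ℤ)) : ℝ)) := by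
  have : (i.insertNth (1:ℝ) y) = (i.insertNth (0:ℝ) y) + fun j => (((if j = i then 1 else 0 : ℤ)) : ℝ) := by
    funext j
    rcases eq_or_ne j i with rfl | hji
    · simp
    · obtain ⟨l, rfl⟩ := Fin.exists_succAbove_eq hji
      simp [Fin.insertNth_apply_succAbove, Fin.succAbove_ne]
  rw [this]
  rfl

lemma integral_sum_spd_eq_zero (W : Fin 3 → E3 → ℝ) (hW : ∀ i, ContDiff ℝ 1 (W i))
    (hper : ∀ i, Per (W i)) :
    (∫ x in Box, ∑ i, spd i (W i) x) = 0 := by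
  have hBox : Box
      = (MeasurableEquiv.toLp 2 (Fin 3 → ℝ)).symm ⁻¹' (Set.univ.pi fun _ => Set.Ico (0:ℝ) 1) := by
    ext x
    simp only [Box, Set.mem_preimage, Set.mem_univ_pi, Set.mem_setOf_eq]
    rfl
  have h1 : (∫ x in Box, ∑ i, spd i (W i) x)
      = ∫ y in (Set.univ.pi fun _ => Set.Ico (0:ℝ) 1), ∑ i, spd i (W i) (psi3 y) := by
    rw [hBox,
      ← (EuclideanSpace.volume_preserving_symm_measurableEquiv_toLp (Fin 3)).setIntegral_preimage_emb
        (MeasurableEquiv.measurableEmbedding _) (fun y => ∑ i, spd i (W i) (psi3 y)) _]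
    rfl
  have h2 : (∫ y in (Set.univ.pi fun _ => Set.Ico (0:ℝ) 1), ∑ i, spd i (W i) (psi3 y))
      = ∫ y in Set.Icc (0 : Fin 3 → ℝ) 1, ∑ i, spd i (W i) (psi3 y) :=
    setIntegral_congr_set Measure.univ_pi_Ico_ae_eq_Icc
  rw [h1, h2]
  have hdiff : ∀ i, Differentiable ℝ (W i) := fun i => (hW i).differentiable one_ne_zero
  set L : (Fin 3 → ℝ) →L[ℝ] E3 :=
    ((PiLp.continuousLinearEquiv 2 ℝ (fun _ : Fin 3 => ℝ)).symm :
      (Fin 3 → ℝ) →L[ℝ] E3) with hL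
  have hLpsi : ∀ y, L y = psi3 y := fun _ => rfl
  have hdivthm := integral_divergence_of_hasFDerivAt_off_countable'
    (a := (0 : Fin 3 → ℝ)) (b := (1 : Fin 3 → ℝ)) (n := 2)
    zero_le_one
    (fun i y => W i (psi3 y))
    (fun i y => (fderiv ℝ (W i) (psi3 y)).comp L)
    ∅ Set.countable_empty
    (fun i => ((hW i).continuous.comp cont_psi3).continuousOn)
    (fun x _ i => ((hdiff i) (psi3 x)).hasFDerivAt.comp x
      ((PiLp.continuousLinearEquiv 2 ℝ (fun _ : Fin 3 => ℝ)).symm.hasFDerivAt))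
    (by
      apply ContinuousOn.integrableOn_compact isCompact_Icc
      apply Continuous.continuousOn
      apply continuous_finset_sum
      intro i _
      simp only [ContinuousLinearMap.comp_apply]
      exact (((hW i).continuous_fderiv one_ne_zero).comp cont_psi3).clm_apply continuous_const)
  have hface : ∀ (i : Fin 3) (x : Fin 2 → ℝ),
      W i (psi3 (i.insertNth ((1 : Fin 3 → ℝ) i) x))
        = W i (psi3 (i.insertNth ((0 : Fin 3 → ℝ) i) x)) := by
    intro i x
    simp only [Pi.one_apply, Pi.zero_apply, psi3_insertNth]
    exact hper i _ _
  have hL2 : ∀ i x, ((fderiv ℝ (W i) (psi3 x)).comp L) (Pi.single i 1)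
      = spd i (W i) (psi3 x) := by
    intro i x
    simp only [ContinuousLinearMap.comp_apply, spd]
    congr 1
  rw [show (fun y => ∑ i, spd i (W i) (psi3 y))
      = fun y => ∑ i, ((fderiv ℝ (W i) (psi3 y)).comp L) (Pi.single i 1) from
      funext fun y => by simp only [hL2]]  at *
  rw [hdivthm]
  refine Finset.sum_eq_zero fun i _ => ?_
  rw [sub_eq_zero]
  refine setIntegral_congr_fun ?_ fun x _ => hface i x
  exact measurableSet_Icc

section Expand
variable {h : ℝ × E3 → ℝ} {B D P : Fin 3 → ℝ × E3 → ℝ}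
variable (hreg : ContDiff ℝ 1 h) (hBreg : ∀ i, ContDiff ℝ 1 (B i))
  (hDreg : ∀ i, ContDiff ℝ 1 (D i)) (hPreg : ∀ i, ContDiff ℝ 1 (P i))
  (hne : ∀ p, h p ≠ 0) (p v : ℝ × E3)

include hreg hBreg hne in
lemma EG : fderiv ℝ (Gfun h B) p v
    = (∑ i, B i p * fderiv ℝ (B i) p v) / h p
      - ((∑ i, (B i p)^2) + 1) * fderiv ℝ h p v / (2 * (h p)^2) := by
  have hnum : DifferentiableAt ℝ (fun q => (∑ i, (B i q)^2) + 1) p :=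
    (DifferentiableAt.fun_sum fun i _ => ((hBreg i).differentiable one_ne_zero p).pow 2).add (differentiableAt_const 1)
  have hsum : DifferentiableAt ℝ (fun q => (∑ i, (B i q)^2)) p :=
    DifferentiableAt.fun_sum fun i _ => ((hBreg i).differentiable one_ne_zero p).pow 2
  unfold Gfun
  rw [fdD (g := fun q => 2 * h q) hnum ((differentiableAt_const 2).mul (hreg.differentiable one_ne_zero p)) (by
    have := hne p; intro hc; rcases mul_eq_zero.mp hc with hc | hc
    · norm_num at hc
    · exact this hc)]
  rw [fdA hsum (differentiableAt_const 1),
    fdSum (f := fun i q => (B i q)^2) (fun i => ((hBreg i).differentiable one_ne_zero p).pow 2),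
    show (∑ i, fderiv ℝ (fun q => (B i q)^2) p v) = ∑ i, 2 * B i p * fderiv ℝ (B i) p v from
      Finset.sum_congr rfl fun i _ => fdP2 ((hBreg i).differentiable one_ne_zero p),
    fdCM 2 (hreg.differentiable one_ne_zero p), fderiv_const_apply]
  have h0 := hne p
  simp only [Fin.sum_univ_three, Pi.zero_apply, ContinuousLinearMap.zero_apply]
  field_simp
  ring

include hreg hBreg hne in
lemma Eg : fderiv ℝ (gfun h B) p v
    = (∑ i, B i p * fderiv ℝ (B i) p v) / (h p)^2
      - ((∑ i, (B i p)^2) + 1) * fderiv ℝ h p v / (h p)^3 := by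
  have hnum : DifferentiableAt ℝ (fun q => (∑ i, (B i q)^2) + 1) p :=
    (DifferentiableAt.fun_sum fun i _ => ((hBreg i).differentiable one_ne_zero p).pow 2).add (differentiableAt_const 1)
  have hsum : DifferentiableAt ℝ (fun q => (∑ i, (B i q)^2)) p :=
    DifferentiableAt.fun_sum fun i _ => ((hBreg i).differentiable one_ne_zero p).pow 2
  unfold gfun
  rw [fdD (g := fun q => 2 * (h q)^2) hnum ((differentiableAt_const 2).mul ((hreg.differentiable one_ne_zero p).pow 2)) (by
    have := hne p; positivity)]
  rw [fdA hsum (differentiableAt_const 1),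
    fdSum (f := fun i q => (B i q)^2) (fun i => ((hBreg i).differentiable one_ne_zero p).pow 2),
    show (∑ i, fderiv ℝ (fun q => (B i q)^2) p v) = ∑ i, 2 * B i p * fderiv ℝ (B i) p v from
      Finset.sum_congr rfl fun i _ => fdP2 ((hBreg i).differentiable one_ne_zero p),
    fdCM (f := fun q => (h q)^2) 2 ((hreg.differentiable one_ne_zero p).pow 2), fdP2 (hreg.differentiable one_ne_zero p), fderiv_const_apply]
  have h0 := hne p
  simp only [Fin.sum_univ_three, Pi.zero_apply, ContinuousLinearMap.zero_apply]
  field_simp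
  ring

include hreg hBreg hDreg hPreg hne in
lemma EW (i : Fin 3) : fderiv ℝ (Wfun h B D P i) p v
    = fderiv ℝ (fun q => B (i+1) q / h q) p v * Ffun h B D P (i+2) p
      + B (i+1) p / h p * fderiv ℝ (Ffun h B D P (i+2)) p v
      - (fderiv ℝ (fun q => B (i+2) q / h q) p v * Ffun h B D P (i+1) p
          + B (i+2) p / h p * fderiv ℝ (Ffun h B D P (i+1)) p v)
      + (fderiv ℝ (gfun h B) p v * P i p + gfun h B p * fderiv ℝ (P i) p v) := by
  have hFd : ∀ j, Differentiable ℝ (Ffun h B D P j) := fun j =>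
    (Fc hreg hBreg hDreg hPreg hne j).differentiable one_ne_zero
  have hgd : Differentiable ℝ (gfun h B) := (gc hreg hBreg hne).differentiable one_ne_zero
  have hBh : ∀ j, DifferentiableAt ℝ (fun q => B j q / h q) p := fun j =>
    (((hBreg j).div hreg hne).differentiable one_ne_zero) p
  unfold Wfun
  rw [fdA (f := fun q => B (i+1) q / h q * Ffun h B D P (i+2) q - B (i+2) q / h q * Ffun h B D P (i+1) q) (g := fun q => gfun h B q * P i q) (((hBh _).mul (hFd _ p)).sub ((hBh _).mul (hFd _ p))) ((hgd p).mul ((hPreg i).differentiable one_ne_zero p)),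
    fdS (f := fun q => B (i+1) q / h q * Ffun h B D P (i+2) q) (g := fun q => B (i+2) q / h q * Ffun h B D P (i+1) q) ((hBh _).mul (hFd _ p)) ((hBh _).mul (hFd _ p)),
    fdM (hBh _) (hFd _ p), fdM (hBh _) (hFd _ p), fdM (hgd p) ((hPreg i).differentiable one_ne_zero p)]

end Expand

section Key
variable {h : ℝ × E3 → ℝ} {B D P : Fin 3 → ℝ × E3 → ℝ}

lemma fin3a : (0+1 : Fin 3) = 1 := rfl
lemma fin3b : (0+2 : Fin 3) = 2 := rfl
lemma fin3c : (1+1 : Fin 3) = 2 := rfl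
lemma fin3d : (1+2 : Fin 3) = 0 := rfl
lemma fin3e : (2+1 : Fin 3) = 0 := rfl
lemma fin3f : (2+2 : Fin 3) = 1 := rfl

lemma keylem (hreg : ContDiff ℝ 1 h) (hBreg : ∀ i, ContDiff ℝ 1 (B i))
    (hne : ∀ p, h p ≠ 0)
    (heq_P : ∀ i p, P i p = (∑ j, pdx j (fun q => B i q * B j q / h q) p)
      + pdx i (fun q => (h q)⁻¹) p)
    (heq_D : ∀ i p, D i p = curlx (fun j q => B j q / h q) i p)
    (hdivB : ∀ p, ∑ i, pdx i (B i) p = 0)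
    (p : ℝ × E3) (j : Fin 3) :
    fderiv ℝ (gfun h B) p (0, unitv j)
      = P j p / h p + (B (j+1) p * D (j+2) p - B (j+2) p * D (j+1) p) / h p := by
  have hd : Differentiable ℝ h := hreg.differentiable one_ne_zero
  have hB : ∀ i, Differentiable ℝ (B i) := fun i => (hBreg i).differentiable one_ne_zero
  have EP1 : ∀ (jj kk : Fin 3) (v : ℝ × E3), fderiv ℝ (fun q => B jj q * B kk q / h q) p v
      = ((fderiv ℝ (B jj) p v * B kk p + B jj p * fderiv ℝ (B kk) p v) * h p
          - B jj p * B kk p * fderiv ℝ h p v) / (h p)^2 := by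
    intro jj kk v
    rw [fdD (f := fun q => B jj q * B kk q) (((hB jj) p).mul ((hB kk) p)) (hd p) (hne p), fdM ((hB jj) p) ((hB kk) p)]
  have EP2 : ∀ v : ℝ × E3, fderiv ℝ (fun q => (h q)⁻¹) p v
      = -fderiv ℝ h p v / (h p)^2 := fun v => fdI (hd p) (hne p)
  have ED : ∀ (jj : Fin 3) (v : ℝ × E3), fderiv ℝ (fun q => B jj q / h q) p v
      = (fderiv ℝ (B jj) p v * h p - B jj p * fderiv ℝ h p v) / (h p)^2 :=
    fun jj v => fdD ((hB jj) p) (hd p) (hne p)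
  have b22 : fderiv ℝ (B 2) p (0, unitv 2)
      = -fderiv ℝ (B 0) p (0, unitv 0) - fderiv ℝ (B 1) p (0, unitv 1) := by
    have := hdivB p
    simp only [Fin.sum_univ_three, pdx] at this
    linarith
  have h0 := hne p
  have key0 : fderiv ℝ (gfun h B) p (0, unitv 0)
      = P 0 p / h p + (B 1 p * D 2 p - B 2 p * D 1 p) / h p := by
    rw [Eg hreg hBreg hne p _, heq_P 0 p, heq_D 2 p, heq_D 1 p]
    simp only [curlx, pdx, Fin.sum_univ_three, fin3a, fin3b, fin3c, fin3d, fin3e, fin3f]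
    simp only [EP1, EP2, ED]
    rw [b22]
    field_simp
    ring
  have key1 : fderiv ℝ (gfun h B) p (0, unitv 1)
      = P 1 p / h p + (B 2 p * D 0 p - B 0 p * D 2 p) / h p := by
    rw [Eg hreg hBreg hne p _, heq_P 1 p, heq_D 0 p, heq_D 2 p]
    simp only [curlx, pdx, Fin.sum_univ_three, fin3a, fin3b, fin3c, fin3d, fin3e, fin3f]
    simp only [EP1, EP2, ED]
    rw [b22]
    field_simp
    ring
  have key2 : fderiv ℝ (gfun h B) p (0, unitv 2)
      = P 2 p / h p + (B 0 p * D 1 p - B 1 p * D 0 p) / h p := by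
    rw [Eg hreg hBreg hne p _, heq_P 2 p, heq_D 1 p, heq_D 0 p]
    simp only [curlx, pdx, Fin.sum_univ_three, fin3a, fin3b, fin3c, fin3d, fin3e, fin3f]
    simp only [EP1, EP2, ED]
    rw [b22]
    field_simp
    ring
  fin_cases j
  · exact key0
  · exact key1
  · exact key2
end Key

section Main
variable {h : ℝ × E3 → ℝ} {B D P : Fin 3 → ℝ × E3 → ℝ}

lemma mainlem (hreg : ContDiff ℝ 1 h) (hBreg : ∀ i, ContDiff ℝ 1 (B i))
    (hDreg : ∀ i, ContDiff ℝ 1 (D i)) (hPreg : ∀ i, ContDiff ℝ 1 (P i))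
    (hne : ∀ p, h p ≠ 0)
    (heq_h : ∀ p, pdt h p + ∑ i, pdx i (P i) p = 0)
    (heq_B : ∀ i p, pdt (B i) p
      + curlx (fun j q => (B (j+1) q * P (j+2) q - B (j+2) q * P (j+1) q + D j q) / h q) i p = 0)
    (heq_D : ∀ i p, D i p = curlx (fun j q => B j q / h q) i p)
    (heq_P : ∀ i p, P i p = (∑ j, pdx j (fun q => B i q * B j q / h q) p)
      + pdx i (fun q => (h q)⁻¹) p)
    (hdivB : ∀ p, ∑ i, pdx i (B i) p = 0)
    (p : ℝ × E3) :
    fderiv ℝ (Gfun h B) p (1, 0)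
      = -((∑ i, ((D i p)^2 + (P i p)^2)) / h p)
        + ∑ i, fderiv ℝ (Wfun h B D P i) p (0, unitv i) := by
  have heqB' : ∀ i p, pdt (B i) p + curlx (Ffun h B D P) i p = 0 := heq_B
  have hBt : ∀ i, fderiv ℝ (B i) p (1, 0) = -curlx (Ffun h B D P) i p := by
    intro i
    have := heqB' i p
    simp only [pdt] at this
    linarith
  have hht : fderiv ℝ h p (1, 0)
      = -(fderiv ℝ (P 0) p (0, unitv 0) + fderiv ℝ (P 1) p (0, unitv 1)
          + fderiv ℝ (P 2) p (0, unitv 2)) := by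
    have := heq_h p
    simp only [pdt, pdx, Fin.sum_univ_three] at this
    linarith
  have hkey : ∀ j, fderiv ℝ (gfun h B) p (0, unitv j)
      = P j p / h p + (B (j+1) p * D (j+2) p - B (j+2) p * D (j+1) p) / h p :=
    keylem hreg hBreg hne heq_P heq_D hdivB p
  have Fval : ∀ j, Ffun h B D P j p
      = (B (j+1) p * P (j+2) p - B (j+2) p * P (j+1) p + D j p) / h p := fun j => rfl
  have gval : gfun h B p = ((∑ i, (B i p)^2) + 1) / (2 * (h p)^2) := rfl
  have hDval0 : D 0 p = fderiv ℝ (fun q => B 2 q / h q) p (0, unitv 1)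
      - fderiv ℝ (fun q => B 1 q / h q) p (0, unitv 2) := by
    rw [heq_D 0 p]; simp only [curlx, pdx, fin3a, fin3b, fin3c, fin3d, fin3e, fin3f]
  have hDval1 : D 1 p = fderiv ℝ (fun q => B 0 q / h q) p (0, unitv 2)
      - fderiv ℝ (fun q => B 2 q / h q) p (0, unitv 0) := by
    rw [heq_D 1 p]; simp only [curlx, pdx, fin3a, fin3b, fin3c, fin3d, fin3e, fin3f]
  have hDval2 : D 2 p = fderiv ℝ (fun q => B 1 q / h q) p (0, unitv 0)
      - fderiv ℝ (fun q => B 0 q / h q) p (0, unitv 1) := by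
    rw [heq_D 2 p]; simp only [curlx, pdx, fin3a, fin3b, fin3c, fin3d, fin3e, fin3f]
  have h0 := hne p
  rw [EG hreg hBreg hne p (1, 0)]
  simp only [Fin.sum_univ_three]
  rw [EW hreg hBreg hDreg hPreg hne p (0, unitv 0) 0,
    EW hreg hBreg hDreg hPreg hne p (0, unitv 1) 1,
    EW hreg hBreg hDreg hPreg hne p (0, unitv 2) 2]
  simp only [hBt, hht, hkey, Fval, gval, Fin.sum_univ_three,
    fin3a, fin3b, fin3c, fin3d, fin3e, fin3f]
  simp only [curlx, pdx, fin3a, fin3b, fin3c, fin3d, fin3e, fin3f]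
  simp only [hDval0, hDval1, hDval2]
  generalize fderiv ℝ (fun q => B 0 q / h q) p = A0
  generalize fderiv ℝ (fun q => B 1 q / h q) p = A1
  generalize fderiv ℝ (fun q => B 2 q / h q) p = A2
  generalize fderiv ℝ (Ffun h B D P 0) p = F0
  generalize fderiv ℝ (Ffun h B D P 1) p = F1
  generalize fderiv ℝ (Ffun h B D P 2) p = F2
  field_simp
  ring
end Main

lemma spd_eq {F : ℝ × E3 → ℝ} (hF : Differentiable ℝ F) (t : ℝ) (i : Fin 3) (x : E3) :
    spd i (fun y => F (t, y)) x = fderiv ℝ F (t, x) (0, unitv i) := by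
  have hline : HasFDerivAt (fun y : E3 => (t, y))
      ((0 : E3 →L[ℝ] ℝ).prod (ContinuousLinearMap.id ℝ E3)) x :=
    (hasFDerivAt_const t x).prodMk (hasFDerivAt_id x)
  have hc := (hF (t, x)).hasFDerivAt.comp x hline
  unfold spd
  rw [show (fun y => F (t, y)) = F ∘ Prod.mk t from rfl, hc.fderiv]
  simp

lemma spd_cont {f : E3 → ℝ} (hf : ContDiff ℝ 1 f) (i : Fin 3) : Continuous (spd i f) := by
  have hrfl : spd i f = fun x => (ContinuousLinearMap.apply ℝ ℝ (unitv i)) (fderiv ℝ f x) := rfl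
  rw [hrfl]
  exact (ContinuousLinearMap.apply ℝ ℝ (unitv i)).continuous.comp (hf.continuous_fderiv one_ne_zero)

/-- energy dissipation identity for smooth solutions of the Darcy
MHD system.  If `(h,B,D,P)` is a `C¹` solution (periodic in space, i.e. on the
torus `𝕋³`) with `h > 0` of
`∂ₜh + ∇·P = 0`, `∂ₜB + ∇×((B×P + D)/h) = 0`, `D = ∇×(B/h)`,
`P = ∇·(B⊗B/h) + ∇(1/h)`, `∇·B = 0`,
then `d/dt ∫_{𝕋³} (B²+1)/(2h) + ∫_{𝕋³} (D²+P²)/h = 0`. -/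
theorem darcy_mhd_energy_dissipation (T : ℝ) (hT : 0 < T)
    (h : ℝ × E3 → ℝ) (B D P : Fin 3 → ℝ × E3 → ℝ)
    (hreg : ContDiff ℝ 1 h) (hBreg : ∀ i, ContDiff ℝ 1 (B i))
    (hDreg : ∀ i, ContDiff ℝ 1 (D i)) (hPreg : ∀ i, ContDiff ℝ 1 (P i))
    (hpos : ∀ p, 0 < h p)
    (hper : ∀ t, Per fun x => h (t, x)) (hBper : ∀ i t, Per fun x => B i (t, x))
    (hDper : ∀ i t, Per fun x => D i (t, x)) (hPper : ∀ i t, Per fun x => P i (t, x))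
    (heq_h : ∀ p, pdt h p + ∑ i, pdx i (P i) p = 0)
    (heq_B : ∀ i p, pdt (B i) p
      + curlx (fun j q => (B (j+1) q * P (j+2) q - B (j+2) q * P (j+1) q + D j q) / h q) i p = 0)
    (heq_D : ∀ i p, D i p = curlx (fun j q => B j q / h q) i p)
    (heq_P : ∀ i p, P i p = (∑ j, pdx j (fun q => B i q * B j q / h q) p)
      + pdx i (fun q => (h q)⁻¹) p)
    (hdivB : ∀ p, ∑ i, pdx i (B i) p = 0)
    (t : ℝ) (ht : t ∈ Set.Icc 0 T) :
    HasDerivAt (fun s => ∫ x in Box, ((∑ i, (B i (s, x))^2) + 1) / (2 * h (s, x)))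
      (-∫ x in Box, (∑ i, ((D i (t, x))^2 + (P i (t, x))^2)) / h (t, x)) t := by
  have hne : ∀ p, h p ≠ 0 := fun p => (hpos p).ne'
  have hGc : ContDiff ℝ 1 (Gfun h B) := Gc hreg hBreg hne
  have hGd : Differentiable ℝ (Gfun h B) := hGc.differentiable one_ne_zero
  -- a compact set containing `Box`
  set K : Set E3 := {x : E3 | ∀ i, x i ∈ Set.Icc (0:ℝ) 1} with hKdef
  have hK : IsCompact K := by
    have hKeq : K = (PiLp.continuousLinearEquiv 2 ℝ (fun _ : Fin 3 => ℝ)).toHomeomorph ⁻¹'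
        (Set.Icc (0 : Fin 3 → ℝ) 1) := by
      ext x
      constructor
      · intro hx
        refine ⟨fun i => (hx i).1, fun i => (hx i).2⟩
      · intro hx i
        exact ⟨hx.1 i, hx.2 i⟩
    rw [hKeq]
    exact (Homeomorph.isCompact_preimage _).mpr isCompact_Icc
  have hBoxK : Box ⊆ K := fun x hx i => ⟨(hx i).1, (hx i).2.le⟩
  have hBoxMeas : MeasurableSet Box := by
    have hbe : Box = (MeasurableEquiv.toLp 2 (Fin 3 → ℝ)).symm ⁻¹'
        (Set.univ.pi fun _ => Set.Ico (0:ℝ) 1) := by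
      ext x
      simp only [Box, Set.mem_preimage, Set.mem_univ_pi, Set.mem_setOf_eq]
      rfl
    rw [hbe]
    exact (MeasurableEquiv.measurable _) (MeasurableSet.univ_pi fun i => measurableSet_Ico)
  have hfinBox : volume Box < ⊤ := lt_of_le_of_lt (measure_mono hBoxK) hK.measure_lt_top
  haveI : IsFiniteMeasure (volume.restrict Box) := by
    constructor
    rwa [Measure.restrict_apply_univ]
  have hIntOn : ∀ f : E3 → ℝ, Continuous f → IntegrableOn f Box := fun f hf =>
    (hf.continuousOn.integrableOn_compact hK).mono_set hBoxK
  -- Step A : differentiation under the integral sign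
  obtain ⟨M, hM⟩ := (isCompact_Icc (a := t - 1) (b := t + 1)).prod hK
    |>.exists_bound_of_continuousOn ((hGc.continuous_fderiv one_ne_zero).continuousOn)
  have hF'cont : ∀ s : ℝ, Continuous fun x : E3 => fderiv ℝ (Gfun h B) (s, x) (1, 0) := by
    intro s
    exact (ContinuousLinearMap.apply ℝ ℝ ((1:ℝ), (0:E3))).continuous.comp
      ((hGc.continuous_fderiv one_ne_zero).comp (Continuous.prodMk_right s))
  have stepA := hasDerivAt_integral_of_dominated_loc_of_deriv_le
    (μ := volume.restrict Box) (F := fun s x => Gfun h B (s, x))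
    (F' := fun s x => fderiv ℝ (Gfun h B) (s, x) (1, 0))
    (bound := fun _ => M * ‖((1:ℝ), (0:E3))‖) (x₀ := t) (s := Metric.ball t 1) (Metric.ball_mem_nhds t one_pos)
    (Filter.Eventually.of_forall fun s =>
      ((hGc.continuous.comp (Continuous.prodMk_right s)).aestronglyMeasurable))
    (hIntOn _ (hGc.continuous.comp (Continuous.prodMk_right t)))
    ((hF'cont t).aestronglyMeasurable)
    (by
      refine Filter.Eventually.mono (ae_restrict_mem hBoxMeas) fun x hx => fun s hs => ?_
      have hsI : s ∈ Set.Icc (t - 1) (t + 1) := by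
        rw [Metric.mem_ball, Real.dist_eq] at hs
        have := abs_lt.mp hs
        constructor <;> linarith [this.1, this.2]
      calc ‖fderiv ℝ (Gfun h B) (s, x) (1, 0)‖
          ≤ ‖fderiv ℝ (Gfun h B) (s, x)‖ * ‖((1:ℝ), (0:E3))‖ :=
            ContinuousLinearMap.le_opNorm _ _
        _ ≤ M * ‖((1:ℝ), (0:E3))‖ :=
            mul_le_mul_of_nonneg_right (hM (s, x) ⟨hsI, hBoxK hx⟩) (norm_nonneg _))
    (integrable_const _)
    (Filter.Eventually.of_forall fun x => fun s _ =>
      (by have hc := (hGd (s, x)).hasFDerivAt.comp_hasDerivAt s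
            ((hasDerivAt_id s).prodMk (hasDerivAt_const s x)); exact hc))
  -- Step B : identify the derivative
  have hWtc : ∀ i, ContDiff ℝ 1 (fun y : E3 => Wfun h B D P i (t, y)) := fun i =>
    (Wc hreg hBreg hDreg hPreg hne i).comp (contDiff_const.prodMk contDiff_id)
  have hWtper : ∀ i, Per (fun y : E3 => Wfun h B D P i (t, y)) := by
    intro i x k
    have hs : ∀ (x : E3) (k : Fin 3 → ℤ), h (t, x + ((WithLp.equiv 2 (Fin 3 → ℝ)).symm fun i => (k i : ℝ)))
        = h (t, x) := hper t
    have hsB : ∀ (j : Fin 3) (x : E3) (k : Fin 3 → ℤ), B j (t, x + ((WithLp.equiv 2 (Fin 3 → ℝ)).symm fun i => (k i : ℝ)))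
        = B j (t, x) := fun j => hBper j t
    have hsD : ∀ (j : Fin 3) (x : E3) (k : Fin 3 → ℤ), D j (t, x + ((WithLp.equiv 2 (Fin 3 → ℝ)).symm fun i => (k i : ℝ)))
        = D j (t, x) := fun j => hDper j t
    have hsP : ∀ (j : Fin 3) (x : E3) (k : Fin 3 → ℤ), P j (t, x + ((WithLp.equiv 2 (Fin 3 → ℝ)).symm fun i => (k i : ℝ)))
        = P j (t, x) := fun j => hPper j t
    simp only [Wfun, Ffun, gfun, hs, hsB, hsD, hsP]
  have hQcont : Continuous fun x : E3 => (∑ i, ((D i (t, x))^2 + (P i (t, x))^2)) / h (t, x) := by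
    refine Continuous.div ?_ (hreg.continuous.comp (Continuous.prodMk_right t)) (fun x => hne (t, x))
    exact continuous_finset_sum _ fun i _ =>
      (((hDreg i).continuous.comp (Continuous.prodMk_right t)).pow 2).add
        (((hPreg i).continuous.comp (Continuous.prodMk_right t)).pow 2)
  have hScont : Continuous fun x : E3 =>
      ∑ i, spd i (fun y => Wfun h B D P i (t, y)) x :=
    continuous_finset_sum _ fun i _ => spd_cont (hWtc i) i
  have hptw : ∀ x : E3, fderiv ℝ (Gfun h B) (t, x) (1, 0)
      = -((∑ i, ((D i (t, x))^2 + (P i (t, x))^2)) / h (t, x))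
        + ∑ i, spd i (fun y => Wfun h B D P i (t, y)) x := by
    intro x
    rw [mainlem hreg hBreg hDreg hPreg hne heq_h heq_B heq_D heq_P hdivB (t, x)]
    congr 1
    exact Finset.sum_congr rfl fun i _ =>
      (spd_eq ((Wc hreg hBreg hDreg hPreg hne i).differentiable one_ne_zero) t i x).symm
  have hval : (∫ x in Box, fderiv ℝ (Gfun h B) (t, x) (1, 0))
      = -∫ x in Box, (∑ i, ((D i (t, x))^2 + (P i (t, x))^2)) / h (t, x) := by
    rw [setIntegral_congr_fun hBoxMeas fun x _ => hptw x]
    rw [integral_add (hIntOn (fun x => -((∑ i, ((D i (t, x))^2 + (P i (t, x))^2)) / h (t, x))) hQcont.neg) (hIntOn _ hScont)]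
    rw [integral_sum_spd_eq_zero _ hWtc hWtper, integral_neg]
    ring
  have hA := stepA.2
  rw [hval] at hA
  exact hA
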